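/- If φ ∈ 𝒮(ℝ^n) with ‖φ‖_{L²} = 1, then the transform U_φψ(z) = (2πℏ)^{−n/2} ∫ exp((i/ℏ)p·(x−x')) φ(x−x') ψ(x') dx' is an isometry from L²(ℝ^n) into L²(ℝ^{2n}): ⟨U_φψ, U_φψ'⟩_{L²(ℝ^{2n})} = ⟨ψ,ψ'⟩_{L²(ℝ^n)} for all ψ, ψ' ∈ 𝒮(ℝ^n). -/

import Mathlib

open Complex Real MeasureTheory FourierTransform SchwartzMap
open scoped RealInnerProductSpace

section Helpers

lemma integrable_conj' {α} [MeasurableSpace α] {μ : Measure α} {f : α → ℂ}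
    (h : Integrable f μ) : Integrable (fun x => (starRingEnd ℂ) (f x)) μ := by
  refine ⟨Complex.continuous_conj.comp_aestronglyMeasurable h.1, ?_⟩
  simpa [HasFiniteIntegral] using h.2

variable {V : Type*} [NormedAddCommGroup V] [InnerProductSpace ℝ V] [FiniteDimensional ℝ V]
  [MeasurableSpace V] [BorelSpace V]

lemma fourier_conj {f : V → ℂ} (x : V) :
    𝓕 (fun ξ => (starRingEnd ℂ) (f ξ)) x = (starRingEnd ℂ) (𝓕⁻ f x) := by
  rw [Real.fourier_eq, Real.fourierInv_eq, ← integral_conj]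
  congr 1 with v
  simp only [Circle.smul_def, Real.fourierChar_apply, smul_eq_mul]
  rw [map_mul, ← Complex.exp_conj]
  congr 2
  simp only [map_mul, Complex.conj_ofReal, Complex.conj_I]
  push_cast
  ring

theorem my_parseval {f g : V → ℂ} (hf : Integrable f) (hfc : Continuous f)
    (hf' : Integrable (𝓕 f)) (hg : Integrable g) :
    ∫ ξ, (starRingEnd ℂ) (𝓕 f ξ) * 𝓕 g ξ = ∫ x, (starRingEnd ℂ) (f x) * g x := by
  have flip_eq : (innerₗ V).flip = innerₗ V := by
    apply LinearMap.ext; intro x; apply LinearMap.ext; intro y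
    simp only [LinearMap.flip_apply, innerₗ_apply_apply]
    exact real_inner_comm x y
  have key := VectorFourier.integral_bilin_fourierIntegral_eq_flip
    (e := Real.fourierChar) (L := innerₗ V) (μ := volume) (ν := volume)
    (f := fun ξ => (starRingEnd ℂ) (𝓕 f ξ)) (g := g)
    (ContinuousLinearMap.mul ℂ ℂ) Real.continuous_fourierChar
    continuous_inner (integrable_conj' hf') hg
  simp only [ContinuousLinearMap.mul_apply', flip_eq] at key
  have e1 : ∀ ξ, VectorFourier.fourierIntegral Real.fourierChar volume (innerₗ V)
      (fun ξ => (starRingEnd ℂ) (𝓕 f ξ)) ξ = (starRingEnd ℂ) (f ξ) := by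
    intro ξ
    have h2 : 𝓕 (fun ξ => (starRingEnd ℂ) (𝓕 f ξ)) ξ = (starRingEnd ℂ) (𝓕⁻ (𝓕 f) ξ) :=
      fourier_conj ξ
    rw [show VectorFourier.fourierIntegral Real.fourierChar volume (innerₗ V)
      (fun ξ => (starRingEnd ℂ) (𝓕 f ξ)) ξ = 𝓕 (fun ξ => (starRingEnd ℂ) (𝓕 f ξ)) ξ from rfl,
      h2, hf.fourierInv_fourier_eq hf' hfc.continuousAt]
  calc ∫ ξ, (starRingEnd ℂ) (𝓕 f ξ) * 𝓕 g ξ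
      = ∫ x, (starRingEnd ℂ) (𝓕 f x) *
          VectorFourier.fourierIntegral Real.fourierChar volume (innerₗ V) g x := rfl
    _ = ∫ ξ, VectorFourier.fourierIntegral Real.fourierChar volume (innerₗ V)
          (fun ξ => (starRingEnd ℂ) (𝓕 f ξ)) ξ * g ξ := key.symm
    _ = ∫ x, (starRingEnd ℂ) (f x) * g x := by simp_rw [e1]

lemma conj_mul_self (z : ℂ) : (starRingEnd ℂ) z * z = ((‖z‖ ^ 2 : ℝ) : ℂ) := by
  rw [mul_comm, Complex.mul_conj]
  norm_cast
  exact Complex.normSq_eq_norm_sq z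

theorem my_parseval_norm {f : V → ℂ} (hf : Integrable f) (hfc : Continuous f)
    (hf' : Integrable (𝓕 f)) :
    ∫ ξ, ‖𝓕 f ξ‖ ^ 2 = ∫ x, ‖f x‖ ^ 2 := by
  have h := my_parseval hf hfc hf' hf
  simp_rw [conj_mul_self] at h
  rw [show (∫ ξ, (((‖𝓕 f ξ‖ ^ 2 : ℝ)) : ℂ)) = ((∫ ξ, ‖𝓕 f ξ‖ ^ 2 : ℝ) : ℂ) from integral_ofReal,
    show (∫ x, (((‖f x‖ ^ 2 : ℝ)) : ℂ)) = ((∫ x, ‖f x‖ ^ 2 : ℝ) : ℂ) from integral_ofReal] at h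
  exact_mod_cast h

end Helpers

section Transfer

lemma integral_euclidean_eq_pi {n : ℕ} {G : Type*} [NormedAddCommGroup G] [NormedSpace ℝ G]
    (f : (Fin n → ℝ) → G) :
    ∫ x : EuclideanSpace ℝ (Fin n), f x = ∫ x : Fin n → ℝ, f x :=
  (EuclideanSpace.volume_preserving_symm_measurableEquiv_toLp (Fin n)).integral_comp
    (MeasurableEquiv.measurableEmbedding _) f

lemma integrable_euclidean_iff {n : ℕ} {G : Type*} [NormedAddCommGroup G]
    (f : (Fin n → ℝ) → G) :
    Integrable (fun x : EuclideanSpace ℝ (Fin n) => f x) ↔ Integrable f := by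
  rw [← MeasurePreserving.integrable_comp_emb
    (EuclideanSpace.volume_preserving_symm_measurableEquiv_toLp (Fin n))
    (MeasurableEquiv.measurableEmbedding _)]
  rfl

end Transfer

section SchwartzHelpers

variable {E F : Type*} [NormedAddCommGroup E] [NormedSpace ℝ E]

lemma schwartz_hasTemperateGrowth (f : 𝓢(E, ℂ)) :
    Function.HasTemperateGrowth ⇑f := by
  refine ⟨f.smooth', fun N => ?_⟩
  obtain ⟨C, hC⟩ := f.decay 0 N
  exact ⟨0, C, fun x => by simpa using hC.2 x⟩

lemma schwartz_bound (f : 𝓢(E, ℂ)) : ∃ C, ∀ x, ‖f x‖ ≤ C := by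
  obtain ⟨C, hC⟩ := f.decay 0 0
  exact ⟨C, fun x => by simpa [norm_iteratedFDeriv_zero] using hC.2 x⟩

/-- Pointwise product of two Schwartz functions, as a Schwartz function. -/
noncomputable def sProd (f g : 𝓢(E, ℂ)) : 𝓢(E, ℂ) :=
  SchwartzMap.bilinLeftCLM (ContinuousLinearMap.mul ℝ ℂ) (schwartz_hasTemperateGrowth g) f

@[simp] lemma sProd_apply (f g : 𝓢(E, ℂ)) (x : E) : sProd f g x = f x * g x := rfl

lemma hasTemperateGrowth_const_sub (x : E) :
    Function.HasTemperateGrowth (fun y : E => x - y) := by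
  refine Function.HasTemperateGrowth.of_fderiv ?_
    ((differentiable_const x).sub differentiable_id) (k := 1) (C := ‖x‖ + 1) (fun y => ?_)
  · have : (fderiv ℝ (fun y : E => x - y)) = fun _ => -(ContinuousLinearMap.id ℝ E) := by
      funext y
      have h1 : HasFDerivAt (fun y : E => x - y) (-(ContinuousLinearMap.id ℝ E)) y := by
        simpa using (hasFDerivAt_id (𝕜 := ℝ) y).const_sub x
      exact h1.fderiv
    rw [this]
    exact Function.HasTemperateGrowth.const _
  · have : ‖x - y‖ ≤ ‖x‖ + ‖y‖ := norm_sub_le x y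
    have h2 : (0:ℝ) ≤ ‖x‖ := norm_nonneg x
    have h3 : (0:ℝ) ≤ ‖y‖ := norm_nonneg y
    calc ‖x - y‖ ≤ ‖x‖ + ‖y‖ := this
      _ ≤ (‖x‖ + 1) * (1 + ‖y‖) ^ 1 := by nlinarith

lemma antilipschitz_const_sub (x : E) :
    AntilipschitzWith 1 (fun y : E => x - y) := by
  have : Isometry (fun y : E => x - y) :=
    Isometry.of_dist_eq (fun a b => by simp [dist_eq_norm, sub_sub_sub_cancel_left, norm_sub_rev])
  exact this.antilipschitz

/-- Translation-reflection `y ↦ f (x - y)` of a Schwartz function. -/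
noncomputable def sTrans (f : 𝓢(E, ℂ)) (x : E) : 𝓢(E, ℂ) :=
  SchwartzMap.compCLMOfAntilipschitz ℝ (hasTemperateGrowth_const_sub x)
    (antilipschitz_const_sub x) f

@[simp] lemma sTrans_apply (f : 𝓢(E, ℂ)) (x y : E) : sTrans f x y = f (x - y) := rfl

end SchwartzHelpers

/-- The transform `U_φ`. -/
noncomputable def Uphi (n : ℕ) (hbar : ℝ) (φ ψ : (Fin n → ℝ) → ℂ)
    (x p : Fin n → ℝ) : ℂ :=
  (((1 / (2 * π * hbar)) ^ ((n : ℝ) / 2) : ℝ) : ℂ) *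
    ∫ x' : Fin n → ℝ,
      Complex.exp ((I / (hbar : ℂ)) * ((∑ i, p i * (x i - x' i) : ℝ) : ℂ))
        * φ (x - x') * ψ x'

section Main

variable {n : ℕ}

noncomputable def toEuc (f : 𝓢((Fin n → ℝ), ℂ)) : 𝓢(EuclideanSpace ℝ (Fin n), ℂ) :=
  SchwartzMap.compCLMOfContinuousLinearEquiv ℝ (EuclideanSpace.equiv (Fin n) ℝ) f

@[simp] lemma toEuc_apply (f : 𝓢((Fin n → ℝ), ℂ)) (x : EuclideanSpace ℝ (Fin n)) :
    toEuc f x = f x := rfl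

/-- `x' ↦ φ(x - x') θ(x')` as a Schwartz function on Euclidean space. -/
noncomputable def gS (φ θ : 𝓢((Fin n → ℝ), ℂ)) (x : EuclideanSpace ℝ (Fin n)) :
    𝓢(EuclideanSpace ℝ (Fin n), ℂ) :=
  sProd (sTrans (toEuc φ) x) (toEuc θ)

@[simp] lemma gS_apply (φ θ : 𝓢((Fin n → ℝ), ℂ)) (x y : EuclideanSpace ℝ (Fin n)) :
    gS φ θ x y = φ (x - y) * θ y := rfl

lemma Uphi_eq (hbar : ℝ) (hhbar : 0 < hbar) (φ θ : 𝓢((Fin n → ℝ), ℂ)) (x p : Fin n → ℝ) :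
    Uphi n hbar ⇑φ ⇑θ x p
      = (((1 / (2 * π * hbar)) ^ ((n : ℝ) / 2) : ℝ) : ℂ) *
          Complex.exp ((I / (hbar : ℂ)) * ((∑ i, p i * x i : ℝ) : ℂ)) *
          𝓕 ⇑(gS φ θ (WithLp.toLp 2 x)) (WithLp.toLp 2 ((2 * π * hbar)⁻¹ • p)) := by
  have hπ : ((π : ℝ) : ℂ) ≠ 0 := by exact_mod_cast Real.pi_ne_zero
  have hb : ((hbar : ℝ) : ℂ) ≠ 0 := by exact_mod_cast ne_of_gt hhbar
  rw [Uphi]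
  conv_rhs => rw [mul_assoc]
  congr 1
  rw [Real.fourier_eq,
    ← integral_euclidean_eq_pi (fun x' : Fin n → ℝ =>
      Complex.exp ((I / (hbar : ℂ)) * ((∑ i, p i * (x i - x' i) : ℝ) : ℂ))
        * φ (x - x') * θ x'), ← integral_const_mul]
  congr 1 with v
  rw [Circle.smul_def, Real.fourierChar_apply, smul_eq_mul]
  rw [show ⟪v, (WithLp.toLp 2 ((2 * π * hbar)⁻¹ • p))⟫
      = (2 * π * hbar)⁻¹ * ∑ i, p i * v i by
    rw [PiLp.inner_apply]
    simp only [RCLike.inner_apply, conj_trivial, PiLp.smul_apply, smul_eq_mul]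
    rw [Finset.mul_sum]
    congr 1 with i
    simp only [Pi.smul_apply, smul_eq_mul]
    ring]
  show Complex.exp ((I / (hbar : ℂ)) * ((∑ i, p i * (x i - v i) : ℝ) : ℂ))
        * φ (fun i => x i - v i) * θ v
      = Complex.exp ((I / (hbar : ℂ)) * ((∑ i, p i * x i : ℝ) : ℂ)) *
          (Complex.exp (((2 * π * -((2 * π * hbar)⁻¹ * ∑ i, p i * v i) : ℝ) : ℂ) * I) *
            (φ (fun i => x i - v i) * θ v))
  conv_lhs => rw [mul_assoc]
  conv_rhs => rw [← mul_assoc, ← Complex.exp_add]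
  congr 2
  have hsum : ∑ i, p i * (x i - v i) = (∑ i, p i * x i) - ∑ i, p i * v i := by
    rw [← Finset.sum_sub_distrib]
    congr 1 with i
    ring
  rw [hsum]
  push_cast
  field_simp
  ring

lemma conjmul_Uphi (hbar : ℝ) (hhbar : 0 < hbar) (φ ψ ψ' : 𝓢((Fin n → ℝ), ℂ))
    (x p : Fin n → ℝ) :
    (starRingEnd ℂ) (Uphi n hbar ⇑φ ⇑ψ x p) * Uphi n hbar ⇑φ ⇑ψ' x p
      = (((((1 / (2 * π * hbar)) ^ ((n : ℝ) / 2)) ^ 2 : ℝ)) : ℂ) *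
          ((starRingEnd ℂ) (𝓕 ⇑(gS φ ψ (WithLp.toLp 2 x)) (WithLp.toLp 2 ((2 * π * hbar)⁻¹ • p))) *
            𝓕 ⇑(gS φ ψ' (WithLp.toLp 2 x)) (WithLp.toLp 2 ((2 * π * hbar)⁻¹ • p))) := by
  rw [Uphi_eq hbar hhbar φ ψ, Uphi_eq hbar hhbar φ ψ']
  set C : ℝ := (1 / (2 * π * hbar)) ^ ((n : ℝ) / 2) with hC
  set e : ℂ := Complex.exp ((I / (hbar : ℂ)) * ((∑ i, p i * x i : ℝ) : ℂ)) with he_def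
  set a : ℂ := 𝓕 ⇑(gS φ ψ (WithLp.toLp 2 x)) (WithLp.toLp 2 ((2 * π * hbar)⁻¹ • p))
  set b : ℂ := 𝓕 ⇑(gS φ ψ' (WithLp.toLp 2 x)) (WithLp.toLp 2 ((2 * π * hbar)⁻¹ • p))
  have he : (starRingEnd ℂ) e * e = 1 := by
    rw [he_def, ← Complex.exp_conj, ← Complex.exp_add]
    have h0 : (starRingEnd ℂ) ((I / (hbar : ℂ)) * ((∑ i, p i * x i : ℝ) : ℂ))
        + (I / (hbar : ℂ)) * ((∑ i, p i * x i : ℝ) : ℂ) = 0 := by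
      simp only [map_mul, map_div₀, Complex.conj_I, Complex.conj_ofReal]
      ring
    rw [h0, Complex.exp_zero]
  have hCC : ((C : ℂ)) * (C : ℂ) = (((C ^ 2 : ℝ)) : ℂ) := by push_cast; ring
  calc (starRingEnd ℂ) ((C : ℂ) * e * a) * ((C : ℂ) * e * b)
      = ((starRingEnd ℂ) e * e) * (((C : ℂ) * (C : ℂ)) * ((starRingEnd ℂ) a * b)) := by
        simp only [map_mul, Complex.conj_ofReal]
        ring
    _ = (((C ^ 2 : ℝ)) : ℂ) * ((starRingEnd ℂ) a * b) := by rw [he, hCC, one_mul]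

variable {D : Type*} [NormedAddCommGroup D] [NormedSpace ℝ D] [MeasurableSpace D]
  [BorelSpace D] [SecondCountableTopology D] {μ : Measure D} [μ.HasTemperateGrowth]

lemma integrable_schwartz_sq_norm (f : 𝓢(D, ℂ)) : Integrable (fun x => ‖f x‖ ^ 2) μ := by
  refine ((sProd f f).integrable (μ := μ)).norm.mono'
    ((f.continuous.norm.pow 2).aestronglyMeasurable) (ae_of_all _ fun x => ?_)
  simp [sProd_apply, norm_mul, sq]

lemma integrable_schwartz_conjmul (f g : 𝓢(D, ℂ)) :
    Integrable (fun x => (starRingEnd ℂ) (f x) * g x) μ := by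
  refine ((sProd f g).integrable (μ := μ)).norm.mono'
    ((Complex.continuous_conj.comp f.continuous).mul g.continuous).aestronglyMeasurable
    (ae_of_all _ fun x => ?_)
  simp [sProd_apply, norm_mul]

lemma integrable_schwartz_norm_mul (f g : 𝓢(D, ℂ)) :
    Integrable (fun x => ‖f x‖ * ‖g x‖) μ := by
  refine ((sProd f g).integrable (μ := μ)).norm.mono'
    (f.continuous.norm.mul g.continuous.norm).aestronglyMeasurable
    (ae_of_all _ fun x => ?_)
  simp [sProd_apply, norm_mul]

lemma norm_exp_I_div_mul (hbar : ℝ) (t : ℝ) :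
    ‖Complex.exp ((I / (hbar : ℂ)) * ((t : ℝ) : ℂ))‖ = 1 := by
  have harg : (I / (hbar : ℂ)) * ((t : ℝ) : ℂ) = (((t / hbar : ℝ)) : ℂ) * I := by
    push_cast
    ring
  rw [harg]
  exact Complex.norm_exp_ofReal_mul_I _

lemma Uphi_continuous (hbar : ℝ) (φ θ : 𝓢((Fin n → ℝ), ℂ)) :
    Continuous (fun z : (Fin n → ℝ) × (Fin n → ℝ) => Uphi n hbar ⇑φ ⇑θ z.1 z.2) := by
  obtain ⟨Cφ, hCφ⟩ := schwartz_bound φ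
  unfold Uphi
  refine continuous_const.mul ?_
  refine MeasureTheory.continuous_of_dominated (bound := fun x' => Cφ * ‖θ x'‖)
    (fun z => ?_) (fun z => ae_of_all _ fun x' => ?_) ((θ.integrable.norm).const_mul Cφ)
    (ae_of_all _ fun x' => ?_)
  · apply Continuous.aestronglyMeasurable
    fun_prop
  · rw [norm_mul, norm_mul, norm_exp_I_div_mul, one_mul]
    exact mul_le_mul_of_nonneg_right (hCφ _) (norm_nonneg _)
  · fun_prop

lemma Vconv_integrable (φ θ : 𝓢((Fin n → ℝ), ℂ)) :
    Integrable (fun x : Fin n → ℝ => ∫ x' : Fin n → ℝ, ‖φ (x - x')‖ ^ 2 * ‖θ x'‖ ^ 2) := by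
  have hf : Integrable (fun t : Fin n → ℝ => ‖θ t‖ ^ 2) := integrable_schwartz_sq_norm θ
  have hg : Integrable (fun t : Fin n → ℝ => ‖φ t‖ ^ 2) := integrable_schwartz_sq_norm φ
  have hconv := hf.integrable_convolution (ContinuousLinearMap.mul ℝ ℝ) hg
  refine hconv.congr (ae_of_all _ fun x => ?_)
  rw [convolution_def]
  simp only [ContinuousLinearMap.mul_apply']
  congr 1 with t
  ring

lemma gS_apply_pi (φ θ : 𝓢((Fin n → ℝ), ℂ)) (x w : Fin n → ℝ) :
    gS φ θ (WithLp.toLp 2 x) (WithLp.toLp 2 w) = φ (x - w) * θ w := rfl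

theorem Uphi_isometry_aux (hbar : ℝ) (hhbar : 0 < hbar)
    (φ : SchwartzMap (Fin n → ℝ) ℂ)
    (hφ : ∫ x : Fin n → ℝ, ‖φ x‖ ^ 2 = 1)
    (ψ ψ' : SchwartzMap (Fin n → ℝ) ℂ) :
    (∫ z : (Fin n → ℝ) × (Fin n → ℝ),
        (starRingEnd ℂ) (Uphi n hbar (⇑φ) (⇑ψ) z.1 z.2) * Uphi n hbar (⇑φ) (⇑ψ') z.1 z.2)
      = ∫ x : Fin n → ℝ, (starRingEnd ℂ) (ψ x) * ψ' x := by
  have hc : (0:ℝ) < 2 * π * hbar := by positivity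
  have hcne : (2 * π * hbar) ≠ 0 := ne_of_gt hc
  set Cr : ℝ := ((1 / (2 * π * hbar)) ^ ((n : ℝ) / 2)) ^ 2 with hCr_def
  have hCrnn : 0 ≤ Cr := sq_nonneg _
  have hCc : Cr * (2 * π * hbar) ^ n = 1 := by
    have h1 : Cr = (1 / (2 * π * hbar)) ^ (n : ℝ) := by
      rw [hCr_def, ← Real.rpow_natCast ((1 / (2 * π * hbar)) ^ ((n : ℝ) / 2)) 2,
        ← Real.rpow_mul (by positivity)]
      norm_num
    rw [h1, Real.rpow_natCast, ← mul_pow]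
    rw [one_div, inv_mul_cancel₀ hcne, one_pow]
  have hFour : ∀ (θ : 𝓢((Fin n → ℝ), ℂ)) (x : Fin n → ℝ),
      ⇑(SchwartzMap.fourierTransformCLM ℂ (gS φ θ (WithLp.toLp 2 x))) = 𝓕 ⇑(gS φ θ (WithLp.toLp 2 x)) := fun θ x => by
    simp
    rfl
  set H : ((Fin n → ℝ) × (Fin n → ℝ)) → ℂ := fun z =>
    (starRingEnd ℂ) (Uphi n hbar (⇑φ) (⇑ψ) z.1 z.2) * Uphi n hbar (⇑φ) (⇑ψ') z.1 z.2
    with hH_def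
  have hKey2 : ∀ x p : Fin n → ℝ, H (x, p)
      = ((Cr : ℝ) : ℂ) *
          ((starRingEnd ℂ) (𝓕 ⇑(gS φ ψ (WithLp.toLp 2 x)) (WithLp.toLp 2 ((2 * π * hbar)⁻¹ • p))) *
            𝓕 ⇑(gS φ ψ' (WithLp.toLp 2 x)) (WithLp.toLp 2 ((2 * π * hbar)⁻¹ • p))) :=
    fun x p => conjmul_Uphi hbar hhbar φ ψ ψ' x p
  have hmeas : AEStronglyMeasurable H (volume.prod volume) :=
    ((Complex.continuous_conj.comp (Uphi_continuous hbar φ ψ)).mul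
      (Uphi_continuous hbar φ ψ')).aestronglyMeasurable
  -- slice integrability
  have hslice : ∀ x : Fin n → ℝ, Integrable (fun p => H (x, p)) := by
    intro x
    have hQE : Integrable (fun w : EuclideanSpace ℝ (Fin n) =>
        (starRingEnd ℂ) (𝓕 ⇑(gS φ ψ (WithLp.toLp 2 x)) w) * 𝓕 ⇑(gS φ ψ' (WithLp.toLp 2 x)) w) := by
      have h := integrable_schwartz_conjmul (μ := volume)
        (SchwartzMap.fourierTransformCLM ℂ (gS φ ψ (WithLp.toLp 2 x)))
        (SchwartzMap.fourierTransformCLM ℂ (gS φ ψ' (WithLp.toLp 2 x)))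
      rwa [hFour ψ x, hFour ψ' x] at h
    have hQP : Integrable (fun w : Fin n → ℝ =>
        (starRingEnd ℂ) (𝓕 ⇑(gS φ ψ (WithLp.toLp 2 x)) (WithLp.toLp 2 w)) * 𝓕 ⇑(gS φ ψ' (WithLp.toLp 2 x)) (WithLp.toLp 2 w)) :=
      (integrable_euclidean_iff _).1 hQE
    have hQc := (integrable_comp_smul_iff volume (fun w : Fin n → ℝ =>
        (starRingEnd ℂ) (𝓕 ⇑(gS φ ψ (WithLp.toLp 2 x)) (WithLp.toLp 2 w)) * 𝓕 ⇑(gS φ ψ' (WithLp.toLp 2 x)) (WithLp.toLp 2 w))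
        (R := (2 * π * hbar)⁻¹) (inv_ne_zero hcne)).2 hQP
    have heq : (fun p : Fin n → ℝ => H (x, p)) = fun p : Fin n → ℝ =>
        ((Cr : ℝ) : ℂ) * ((fun w : Fin n → ℝ =>
          (starRingEnd ℂ) (𝓕 ⇑(gS φ ψ (WithLp.toLp 2 x)) (WithLp.toLp 2 w)) * 𝓕 ⇑(gS φ ψ' (WithLp.toLp 2 x)) (WithLp.toLp 2 w)) ((2 * π * hbar)⁻¹ • p)) :=
      funext fun p => hKey2 x p
    rw [heq]
    exact hQc.const_mul _
  -- Parseval norm identities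
  have hPnorm : ∀ (θ : 𝓢((Fin n → ℝ), ℂ)) (x : Fin n → ℝ),
      ∫ w : EuclideanSpace ℝ (Fin n), ‖𝓕 ⇑(gS φ θ (WithLp.toLp 2 x)) w‖ ^ 2
        = ∫ x' : Fin n → ℝ, ‖φ (x - x')‖ ^ 2 * ‖θ x'‖ ^ 2 := by
    intro θ x
    have hFint : Integrable (𝓕 ⇑(gS φ θ (WithLp.toLp 2 x))) := by
      rw [← hFour θ x]; exact (SchwartzMap.fourierTransformCLM ℂ (gS φ θ (WithLp.toLp 2 x))).integrable
    calc ∫ w : EuclideanSpace ℝ (Fin n), ‖𝓕 ⇑(gS φ θ (WithLp.toLp 2 x)) w‖ ^ 2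
        = ∫ x' : EuclideanSpace ℝ (Fin n), ‖gS φ θ (WithLp.toLp 2 x) x'‖ ^ 2 :=
          my_parseval_norm (gS φ θ (WithLp.toLp 2 x)).integrable (gS φ θ (WithLp.toLp 2 x)).continuous hFint
      _ = ∫ x' : Fin n → ℝ, ‖gS φ θ (WithLp.toLp 2 x) (WithLp.toLp 2 x')‖ ^ 2 :=
          integral_euclidean_eq_pi (fun x' : Fin n → ℝ => ‖gS φ θ (WithLp.toLp 2 x) (WithLp.toLp 2 x')‖ ^ 2)
      _ = ∫ x' : Fin n → ℝ, ‖φ (x - x')‖ ^ 2 * ‖θ x'‖ ^ 2 := by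
          refine integral_congr_ae (ae_of_all _ fun x' => ?_)
          simp only [gS_apply_pi, norm_mul, mul_pow]
  -- value of the inner p-integral of norms
  have hpnorm : ∀ x : Fin n → ℝ, ∫ p : Fin n → ℝ, ‖H (x, p)‖
      = ∫ w : EuclideanSpace ℝ (Fin n), ‖𝓕 ⇑(gS φ ψ (WithLp.toLp 2 x)) w‖ * ‖𝓕 ⇑(gS φ ψ' (WithLp.toLp 2 x)) w‖ := by
    intro x
    calc ∫ p : Fin n → ℝ, ‖H (x, p)‖
        = ∫ p : Fin n → ℝ, Cr * ((fun w : Fin n → ℝ =>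
            ‖𝓕 ⇑(gS φ ψ (WithLp.toLp 2 x)) (WithLp.toLp 2 w)‖ * ‖𝓕 ⇑(gS φ ψ' (WithLp.toLp 2 x)) (WithLp.toLp 2 w)‖) ((2 * π * hbar)⁻¹ • p)) := by
          refine integral_congr_ae (ae_of_all _ fun p => ?_)
          show ‖H (x, p)‖ = Cr * (‖𝓕 ⇑(gS φ ψ (WithLp.toLp 2 x)) (WithLp.toLp 2 ((2 * π * hbar)⁻¹ • p))‖ *
            ‖𝓕 ⇑(gS φ ψ' (WithLp.toLp 2 x)) (WithLp.toLp 2 ((2 * π * hbar)⁻¹ • p))‖)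
          rw [hKey2 x p, norm_mul, norm_mul, RCLike.norm_conj, Complex.norm_real,
            Real.norm_eq_abs, _root_.abs_of_nonneg hCrnn]
      _ = Cr * ∫ p : Fin n → ℝ, (fun w : Fin n → ℝ =>
            ‖𝓕 ⇑(gS φ ψ (WithLp.toLp 2 x)) (WithLp.toLp 2 w)‖ * ‖𝓕 ⇑(gS φ ψ' (WithLp.toLp 2 x)) (WithLp.toLp 2 w)‖) ((2 * π * hbar)⁻¹ • p) :=
          integral_const_mul _ _
      _ = Cr * (|(((2 * π * hbar)⁻¹) ^ (Module.finrank ℝ (Fin n → ℝ)))⁻¹| •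
            ∫ w : Fin n → ℝ, ‖𝓕 ⇑(gS φ ψ (WithLp.toLp 2 x)) (WithLp.toLp 2 w)‖ * ‖𝓕 ⇑(gS φ ψ' (WithLp.toLp 2 x)) (WithLp.toLp 2 w)‖) := by
          rw [Measure.integral_comp_smul volume (fun w : Fin n → ℝ =>
            ‖𝓕 ⇑(gS φ ψ (WithLp.toLp 2 x)) (WithLp.toLp 2 w)‖ * ‖𝓕 ⇑(gS φ ψ' (WithLp.toLp 2 x)) (WithLp.toLp 2 w)‖) ((2 * π * hbar)⁻¹)]
      _ = Cr * ((2 * π * hbar) ^ n *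
            ∫ w : Fin n → ℝ, ‖𝓕 ⇑(gS φ ψ (WithLp.toLp 2 x)) (WithLp.toLp 2 w)‖ * ‖𝓕 ⇑(gS φ ψ' (WithLp.toLp 2 x)) (WithLp.toLp 2 w)‖) := by
          rw [Module.finrank_fin_fun, inv_pow, inv_inv,
            _root_.abs_of_nonneg (pow_nonneg hc.le n), smul_eq_mul]
      _ = ∫ w : Fin n → ℝ, ‖𝓕 ⇑(gS φ ψ (WithLp.toLp 2 x)) (WithLp.toLp 2 w)‖ * ‖𝓕 ⇑(gS φ ψ' (WithLp.toLp 2 x)) (WithLp.toLp 2 w)‖ := by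
          rw [← mul_assoc, hCc, one_mul]
      _ = ∫ w : EuclideanSpace ℝ (Fin n), ‖𝓕 ⇑(gS φ ψ (WithLp.toLp 2 x)) w‖ * ‖𝓕 ⇑(gS φ ψ' (WithLp.toLp 2 x)) w‖ :=
          (integral_euclidean_eq_pi _).symm
  -- integrability of the x-integral of p-norms
  have hxInt : Integrable (fun x : Fin n → ℝ => ∫ p : Fin n → ℝ, ‖H (x, p)‖) := by
    refine Integrable.mono'
      (((Vconv_integrable φ ψ).add (Vconv_integrable φ ψ')).div_const 2)
      (hmeas.norm.integral_prod_right') (ae_of_all _ fun x => ?_)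
    rw [Real.norm_eq_abs, _root_.abs_of_nonneg (integral_nonneg (fun p => norm_nonneg _))]
    have hNQ : Integrable (fun w : EuclideanSpace ℝ (Fin n) =>
        ‖𝓕 ⇑(gS φ ψ (WithLp.toLp 2 x)) w‖ * ‖𝓕 ⇑(gS φ ψ' (WithLp.toLp 2 x)) w‖) := by
      have h := integrable_schwartz_norm_mul (μ := volume)
        (SchwartzMap.fourierTransformCLM ℂ (gS φ ψ (WithLp.toLp 2 x)))
        (SchwartzMap.fourierTransformCLM ℂ (gS φ ψ' (WithLp.toLp 2 x)))
      rwa [hFour ψ x, hFour ψ' x] at h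
    have hsq1 : Integrable (fun w : EuclideanSpace ℝ (Fin n) => ‖𝓕 ⇑(gS φ ψ (WithLp.toLp 2 x)) w‖ ^ 2) := by
      have h := integrable_schwartz_sq_norm (μ := volume)
        (SchwartzMap.fourierTransformCLM ℂ (gS φ ψ (WithLp.toLp 2 x)))
      rwa [hFour ψ x] at h
    have hsq2 : Integrable (fun w : EuclideanSpace ℝ (Fin n) => ‖𝓕 ⇑(gS φ ψ' (WithLp.toLp 2 x)) w‖ ^ 2) := by
      have h := integrable_schwartz_sq_norm (μ := volume)
        (SchwartzMap.fourierTransformCLM ℂ (gS φ ψ' (WithLp.toLp 2 x)))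
      rwa [hFour ψ' x] at h
    calc ∫ p : Fin n → ℝ, ‖H (x, p)‖
        = ∫ w : EuclideanSpace ℝ (Fin n), ‖𝓕 ⇑(gS φ ψ (WithLp.toLp 2 x)) w‖ * ‖𝓕 ⇑(gS φ ψ' (WithLp.toLp 2 x)) w‖ := hpnorm x
      _ ≤ ∫ w : EuclideanSpace ℝ (Fin n),
            (‖𝓕 ⇑(gS φ ψ (WithLp.toLp 2 x)) w‖ ^ 2 + ‖𝓕 ⇑(gS φ ψ' (WithLp.toLp 2 x)) w‖ ^ 2) / 2 := by
          refine integral_mono hNQ ?_ (fun w => ?_)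
          · exact (hsq1.add hsq2).div_const 2
          · nlinarith [sq_nonneg (‖𝓕 ⇑(gS φ ψ (WithLp.toLp 2 x)) w‖ - ‖𝓕 ⇑(gS φ ψ' (WithLp.toLp 2 x)) w‖)]
      _ = ((∫ w : EuclideanSpace ℝ (Fin n), ‖𝓕 ⇑(gS φ ψ (WithLp.toLp 2 x)) w‖ ^ 2)
            + ∫ w : EuclideanSpace ℝ (Fin n), ‖𝓕 ⇑(gS φ ψ' (WithLp.toLp 2 x)) w‖ ^ 2) / 2 := by
          rw [integral_div, integral_add hsq1 hsq2]
      _ = ((∫ x' : Fin n → ℝ, ‖φ (x - x')‖ ^ 2 * ‖ψ x'‖ ^ 2)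
            + ∫ x' : Fin n → ℝ, ‖φ (x - x')‖ ^ 2 * ‖ψ' x'‖ ^ 2) / 2 := by
          rw [hPnorm ψ x, hPnorm ψ' x]
  have hInt : Integrable H (volume.prod volume) :=
    (integrable_prod_iff hmeas).2 ⟨ae_of_all _ hslice, hxInt⟩
  -- value of the inner p-integral
  have hstep1 : ∀ x : Fin n → ℝ, ∫ p : Fin n → ℝ, H (x, p)
      = ∫ x' : Fin n → ℝ,
          ((starRingEnd ℂ) (ψ x') * ψ' x') * ((‖φ (x - x')‖ ^ 2 : ℝ) : ℂ) := by
    intro x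
    have hFintA : Integrable (𝓕 ⇑(gS φ ψ (WithLp.toLp 2 x))) := by
      rw [← hFour ψ x]; exact (SchwartzMap.fourierTransformCLM ℂ (gS φ ψ (WithLp.toLp 2 x))).integrable
    calc ∫ p : Fin n → ℝ, H (x, p)
        = ∫ p : Fin n → ℝ, ((Cr : ℝ) : ℂ) * ((fun w : Fin n → ℝ =>
            (starRingEnd ℂ) (𝓕 ⇑(gS φ ψ (WithLp.toLp 2 x)) (WithLp.toLp 2 w)) * 𝓕 ⇑(gS φ ψ' (WithLp.toLp 2 x)) (WithLp.toLp 2 w))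
              ((2 * π * hbar)⁻¹ • p)) :=
          integral_congr_ae (ae_of_all _ fun p => hKey2 x p)
      _ = ((Cr : ℝ) : ℂ) * ∫ p : Fin n → ℝ, (fun w : Fin n → ℝ =>
            (starRingEnd ℂ) (𝓕 ⇑(gS φ ψ (WithLp.toLp 2 x)) (WithLp.toLp 2 w)) * 𝓕 ⇑(gS φ ψ' (WithLp.toLp 2 x)) (WithLp.toLp 2 w))
              ((2 * π * hbar)⁻¹ • p) := integral_const_mul _ _
      _ = ((Cr : ℝ) : ℂ) * (|(((2 * π * hbar)⁻¹) ^ (Module.finrank ℝ (Fin n → ℝ)))⁻¹| •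
            ∫ w : Fin n → ℝ, (starRingEnd ℂ) (𝓕 ⇑(gS φ ψ (WithLp.toLp 2 x)) (WithLp.toLp 2 w)) * 𝓕 ⇑(gS φ ψ' (WithLp.toLp 2 x)) (WithLp.toLp 2 w)) := by
          rw [Measure.integral_comp_smul volume (fun w : Fin n → ℝ =>
            (starRingEnd ℂ) (𝓕 ⇑(gS φ ψ (WithLp.toLp 2 x)) (WithLp.toLp 2 w)) * 𝓕 ⇑(gS φ ψ' (WithLp.toLp 2 x)) (WithLp.toLp 2 w)) ((2 * π * hbar)⁻¹)]
      _ = ((Cr : ℝ) : ℂ) * (((2 * π * hbar) ^ n : ℝ) •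
            ∫ w : Fin n → ℝ, (starRingEnd ℂ) (𝓕 ⇑(gS φ ψ (WithLp.toLp 2 x)) (WithLp.toLp 2 w)) * 𝓕 ⇑(gS φ ψ' (WithLp.toLp 2 x)) (WithLp.toLp 2 w)) := by
          rw [Module.finrank_fin_fun, inv_pow, inv_inv,
            _root_.abs_of_nonneg (pow_nonneg hc.le n)]
      _ = ((Cr * (2 * π * hbar) ^ n : ℝ) : ℂ) *
            ∫ w : Fin n → ℝ, (starRingEnd ℂ) (𝓕 ⇑(gS φ ψ (WithLp.toLp 2 x)) (WithLp.toLp 2 w)) * 𝓕 ⇑(gS φ ψ' (WithLp.toLp 2 x)) (WithLp.toLp 2 w) := by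
          rw [Complex.real_smul]
          push_cast
          ring
      _ = ∫ w : Fin n → ℝ, (starRingEnd ℂ) (𝓕 ⇑(gS φ ψ (WithLp.toLp 2 x)) (WithLp.toLp 2 w)) * 𝓕 ⇑(gS φ ψ' (WithLp.toLp 2 x)) (WithLp.toLp 2 w) := by
          rw [hCc]
          simp
      _ = ∫ w : EuclideanSpace ℝ (Fin n),
            (starRingEnd ℂ) (𝓕 ⇑(gS φ ψ (WithLp.toLp 2 x)) w) * 𝓕 ⇑(gS φ ψ' (WithLp.toLp 2 x)) w :=
          (integral_euclidean_eq_pi _).symm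
      _ = ∫ x' : EuclideanSpace ℝ (Fin n),
            (starRingEnd ℂ) (gS φ ψ (WithLp.toLp 2 x) x') * gS φ ψ' (WithLp.toLp 2 x) x' :=
          my_parseval (gS φ ψ (WithLp.toLp 2 x)).integrable (gS φ ψ (WithLp.toLp 2 x)).continuous hFintA
            (gS φ ψ' (WithLp.toLp 2 x)).integrable
      _ = ∫ x' : Fin n → ℝ, (starRingEnd ℂ) (gS φ ψ (WithLp.toLp 2 x) (WithLp.toLp 2 x')) * gS φ ψ' (WithLp.toLp 2 x) (WithLp.toLp 2 x') :=
          integral_euclidean_eq_pi (fun x' : Fin n → ℝ => (starRingEnd ℂ) (gS φ ψ (WithLp.toLp 2 x) (WithLp.toLp 2 x')) * gS φ ψ' (WithLp.toLp 2 x) (WithLp.toLp 2 x'))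
      _ = ∫ x' : Fin n → ℝ,
            ((starRingEnd ℂ) (ψ x') * ψ' x') * ((‖φ (x - x')‖ ^ 2 : ℝ) : ℂ) := by
          refine integral_congr_ae (ae_of_all _ fun x' => ?_)
          simp only [gS_apply_pi, map_mul]
          rw [← conj_mul_self (φ (x - x'))]
          ring
  -- final kernel integrability for Fubini swap
  have hker : Integrable (Function.uncurry (fun x x' : Fin n → ℝ =>
      ((starRingEnd ℂ) (ψ x') * ψ' x') * ((‖φ (x - x')‖ ^ 2 : ℝ) : ℂ)))
      (volume.prod volume) := by
    have h := (integrable_schwartz_conjmul (μ := (volume : Measure (Fin n → ℝ))) ψ ψ').convolution_integrand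
      (ContinuousLinearMap.mul ℂ ℂ) ((integrable_schwartz_sq_norm (μ := (volume : Measure (Fin n → ℝ))) φ).ofReal)
    simpa [Function.uncurry_def, ContinuousLinearMap.mul_apply'] using h
  have hinner : ∀ x' : Fin n → ℝ,
      (∫ x : Fin n → ℝ, ((‖φ (x - x')‖ ^ 2 : ℝ) : ℂ)) = 1 := by
    intro x'
    rw [integral_sub_right_eq_self (fun y : Fin n → ℝ => ((‖φ y‖ ^ 2 : ℝ) : ℂ)) x']
    rw [show (∫ y : Fin n → ℝ, ((‖φ y‖ ^ 2 : ℝ) : ℂ))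
        = ((∫ y : Fin n → ℝ, ‖φ y‖ ^ 2 : ℝ) : ℂ) from integral_ofReal, hφ]
    norm_num
  calc (∫ z : (Fin n → ℝ) × (Fin n → ℝ), H z)
      = ∫ z : (Fin n → ℝ) × (Fin n → ℝ), H z ∂(volume.prod volume) := by
        rw [← Measure.volume_eq_prod]
    _ = ∫ x : Fin n → ℝ, ∫ p : Fin n → ℝ, H (x, p) := integral_prod _ hInt
    _ = ∫ x : Fin n → ℝ, ∫ x' : Fin n → ℝ,
          ((starRingEnd ℂ) (ψ x') * ψ' x') * ((‖φ (x - x')‖ ^ 2 : ℝ) : ℂ) :=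
        integral_congr_ae (ae_of_all _ hstep1)
    _ = ∫ x' : Fin n → ℝ, ∫ x : Fin n → ℝ,
          ((starRingEnd ℂ) (ψ x') * ψ' x') * ((‖φ (x - x')‖ ^ 2 : ℝ) : ℂ) :=
        integral_integral_swap hker
    _ = ∫ x' : Fin n → ℝ,
          ((starRingEnd ℂ) (ψ x') * ψ' x') * ∫ x : Fin n → ℝ, ((‖φ (x - x')‖ ^ 2 : ℝ) : ℂ) := by
        refine integral_congr_ae (ae_of_all _ fun x' => ?_)
        exact integral_const_mul _ _
    _ = ∫ x : Fin n → ℝ, (starRingEnd ℂ) (ψ x) * ψ' x := by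
        refine integral_congr_ae (ae_of_all _ fun x' => ?_)
        show ((starRingEnd ℂ) (ψ x') * ψ' x') *
          (∫ x : Fin n → ℝ, ((‖φ (x - x')‖ ^ 2 : ℝ) : ℂ)) = (starRingEnd ℂ) (ψ x') * ψ' x'
        rw [hinner x', mul_one]

end Main

/-- If `‖φ‖_{L²} = 1` then `U_φ` is an isometry `L²(ℝⁿ) → L²(ℝ²ⁿ)`:
`⟨U_φψ, U_φψ'⟩ = ⟨ψ, ψ'⟩`. -/
theorem Uphi_isometry (n : ℕ) (hbar : ℝ) (hhbar : 0 < hbar)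
    (φ : SchwartzMap (Fin n → ℝ) ℂ)
    (hφ : ∫ x : Fin n → ℝ, ‖φ x‖ ^ 2 = 1)
    (ψ ψ' : SchwartzMap (Fin n → ℝ) ℂ) :
    (∫ z : (Fin n → ℝ) × (Fin n → ℝ),
        (starRingEnd ℂ) (Uphi n hbar (⇑φ) (⇑ψ) z.1 z.2) * Uphi n hbar (⇑φ) (⇑ψ') z.1 z.2)
      = ∫ x : Fin n → ℝ, (starRingEnd ℂ) (ψ x) * ψ' x :=
  Uphi_isometry_aux hbar hhbar φ hφ ψ ψ'
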